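/- Let V be a nonempty finite type with cardinality K, σ : V → V a successor function, and w : V → ℤ a weight function. Suppose every cycle of σ has strictly negative weight, i.e., for all v ∈ V and all k ≥ 1 with σ^[k] v = v one has ∑_{i<k} w (σ^[i] v) < 0. Then for every v ∈ V, the limit superior as n → ∞ of the running averages (Sₙ(v) : ℝ)/n is at most −1/K, where Sₙ(v) = ∑_{i<n} w (σ^[i] v). -/

import Mathlib

open Filter

/-- If every cycle of a successor function on a nonempty finite weighted
arena with `K` vertices has strictly negative weight, then the limit
superior of the running averages along any orbit is at most `-1/K`. -/
theorem limsup_avg_le_of_neg_cycles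
    {V : Type*} [Fintype V] [Nonempty V] (σ : V → V) (w : V → ℤ)
    (K : ℕ) (hK : K = Fintype.card V)
    (hcyc : ∀ v : V, ∀ k : ℕ, 1 ≤ k → σ^[k] v = v →
      (∑ i ∈ Finset.range k, w (σ^[i] v)) < 0)
    (v : V) :
    Filter.limsup
      (fun n : ℕ => ((∑ i ∈ Finset.range n, w (σ^[i] v) : ℤ) : ℝ) / n)
      Filter.atTop ≤ -1 / K := by
  classical
  set S : ℕ → ℤ := fun n => ∑ i ∈ Finset.range n, w (σ^[i] v) with hSdef
  have hKpos : 0 < K := hK ▸ Fintype.card_pos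
  -- pigeonhole: find a cycle on the orbit
  obtain ⟨m, ℓ, hℓ1, hmℓK, hfix0⟩ :
      ∃ m ℓ : ℕ, 1 ≤ ℓ ∧ ℓ ≤ K ∧ σ^[ℓ] (σ^[m] v) = σ^[m] v := by
    have hcard : Fintype.card V < Fintype.card (Fin (K + 1)) := by
      simp [hK]
    obtain ⟨a, b, hab, heq⟩ :=
      Fintype.exists_ne_map_eq_of_card_lt (fun i : Fin (K + 1) => σ^[(i : ℕ)] v) hcard
    rcases Nat.lt_or_ge (a : ℕ) (b : ℕ) with h | h
    · refine ⟨a, b - a, by omega, by omega, ?_⟩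
      rw [← Function.iterate_add_apply]
      have : (b : ℕ) - a + a = b := by omega
      rw [this, heq]
    · have h' : (b : ℕ) < a := by
        rcases lt_or_eq_of_le h with h' | h'
        · exact h'
        · exact absurd (Fin.ext h'.symm) hab
      refine ⟨b, a - b, by omega, by omega, ?_⟩
      rw [← Function.iterate_add_apply]
      have : (a : ℕ) - b + b = a := by omega
      rw [this, heq]
  -- points after time m are on the cycle
  have hfix : ∀ t : ℕ, σ^[ℓ] (σ^[m + t] v) = σ^[m + t] v := by
    intro t
    have h1 : σ^[m + t] v = σ^[t] (σ^[m] v) := by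
      rw [Nat.add_comm, Function.iterate_add_apply]
    rw [h1, ← Function.iterate_add_apply, Nat.add_comm ℓ t,
      Function.iterate_add_apply, hfix0]
  -- each extra loop around the cycle decreases the partial sum by at least 1
  have hstep : ∀ t : ℕ, S (m + t + ℓ) ≤ S (m + t) - 1 := by
    intro t
    have hc := hcyc (σ^[m + t] v) ℓ hℓ1 (hfix t)
    have hsum : S (m + t + ℓ) =
        S (m + t) + ∑ i ∈ Finset.range ℓ, w (σ^[i] (σ^[m + t] v)) := by
      rw [hSdef]
      simp only
      rw [Finset.sum_range_add]
      congr 1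
      refine Finset.sum_congr rfl fun i _ => ?_
      rw [← Function.iterate_add_apply, Nat.add_comm]
    omega
  have hiter : ∀ j t : ℕ, S (m + t + j * ℓ) ≤ S (m + t) - j := by
    intro j
    induction j with
    | zero => intro t; simp
    | succ j ih =>
        intro t
        have h1 : m + t + (j + 1) * ℓ = m + (t + j * ℓ) + ℓ := by ring
        have h2 := hstep (t + j * ℓ)
        have h3 := ih t
        have h4 : m + t + j * ℓ = m + (t + j * ℓ) := by ring
        rw [h1]
        push_cast
        rw [h4] at h3
        linarith
  -- uniform bound on weights
  obtain ⟨Mz, hMz⟩ := Finite.exists_le (fun x : V => |w x|)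
  have hMz0 : 0 ≤ Mz := le_trans (abs_nonneg _) (hMz (Classical.arbitrary V))
  have habs : ∀ n : ℕ, |S n| ≤ (n : ℤ) * Mz := by
    intro n
    calc |S n| ≤ ∑ i ∈ Finset.range n, |w (σ^[i] v)| :=
          Finset.abs_sum_le_sum_abs _ _
      _ ≤ ∑ _i ∈ Finset.range n, Mz := Finset.sum_le_sum fun i _ => hMz _
      _ = (n : ℤ) * Mz := by simp [mul_comm]
  -- the integer key bound
  set D : ℤ := (K : ℤ) * ((m : ℤ) + ℓ) * Mz + m + ℓ with hDdef
  have key : ∀ n : ℕ, (K : ℤ) * S n ≤ D - n := by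
    intro n
    have hK1 : (1 : ℤ) ≤ (K : ℤ) := by exact_mod_cast hKpos
    rcases Nat.lt_or_ge n m with h | h
    · have h1 := habs n
      have h2 : S n ≤ (n : ℤ) * Mz := le_trans (le_abs_self _) h1
      have h3 : (n : ℤ) * Mz ≤ ((m : ℤ) + ℓ) * Mz := by
        have : (n : ℤ) ≤ (m : ℤ) + ℓ := by exact_mod_cast Nat.le_of_lt (by omega)
        exact mul_le_mul_of_nonneg_right this hMz0
      have h4 : (K : ℤ) * S n ≤ (K : ℤ) * (((m : ℤ) + ℓ) * Mz) :=
        mul_le_mul_of_nonneg_left (le_trans h2 h3) (by linarith)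
      have h5 : (n : ℤ) ≤ (m : ℤ) + ℓ := by exact_mod_cast Nat.le_of_lt (by omega)
      rw [hDdef]; nlinarith
    · set d : ℕ := n - m with hd
      set j : ℕ := d / ℓ with hj
      set r : ℕ := d % ℓ with hr
      have hdm : ℓ * j + r = d := Nat.div_add_mod d ℓ
      have hrℓ : r < ℓ := Nat.mod_lt _ (by omega)
      have hcomm : j * ℓ = ℓ * j := Nat.mul_comm _ _
      have hn : n = m + r + j * ℓ := by omega
      have h1 : S n ≤ S (m + r) - j := by rw [hn]; exact hiter j r
      have h2 : S (m + r) ≤ ((m : ℤ) + r) * Mz :=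
        le_trans (le_abs_self _) (by exact_mod_cast habs (m + r))
      have h3 : ((m : ℤ) + r) * Mz ≤ ((m : ℤ) + ℓ) * Mz := by
        have : (m : ℤ) + r ≤ (m : ℤ) + ℓ := by
          have : (r : ℤ) ≤ (ℓ : ℤ) := by exact_mod_cast Nat.le_of_lt hrℓ
          linarith
        exact mul_le_mul_of_nonneg_right this hMz0
      have h4 : (K : ℤ) * S n ≤ (K : ℤ) * (((m : ℤ) + ℓ) * Mz - j) :=
        mul_le_mul_of_nonneg_left (by linarith) (by linarith)
      have h5 : (ℓ : ℤ) * j ≥ (d : ℤ) - ℓ + 1 := by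
        have e1 : (ℓ : ℤ) * j + r = d := by exact_mod_cast hdm
        have e2 : (r : ℤ) < ℓ := by exact_mod_cast hrℓ
        omega
      have h6 : (K : ℤ) * j ≥ (ℓ : ℤ) * j := by
        have hℓK : (ℓ : ℤ) ≤ K := by exact_mod_cast hmℓK
        have hj0 : (0 : ℤ) ≤ j := Int.natCast_nonneg _
        nlinarith
      have h7 : (d : ℤ) = (n : ℤ) - m := by
        have : (m : ℕ) ≤ n := h
        omega
      rw [hDdef]
      nlinarith
  -- pass to the reals
  set f : ℕ → ℝ := fun n : ℕ => ((S n : ℤ) : ℝ) / n with hfdef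
  set g : ℕ → ℝ := fun n : ℕ => ((D : ℝ) / K) / n - 1 / K with hgdef
  have hKR : (0 : ℝ) < (K : ℝ) := by exact_mod_cast hKpos
  have hfg : ∀ᶠ n in atTop, f n ≤ g n := by
    filter_upwards [eventually_ge_atTop 1] with n hn
    have hnR : (0 : ℝ) < (n : ℝ) := by exact_mod_cast hn
    have h1 : (K : ℝ) * (S n : ℝ) ≤ (D : ℝ) - n := by exact_mod_cast key n
    have h2 : ((S n : ℤ) : ℝ) ≤ ((D : ℝ) - n) / K := by
      rw [le_div_iff₀ hKR]; linarith
    have h3 : ((S n : ℤ) : ℝ) / n ≤ (((D : ℝ) - n) / K) / n := by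
      gcongr
    have h4 : (((D : ℝ) - n) / K) / n = g n := by
      rw [hgdef]
      field_simp
    show ((S n : ℤ) : ℝ) / n ≤ g n
    rw [← h4]
    exact h3
  have hg : Tendsto g atTop (nhds (-1 / K)) := by
    have h1 : Tendsto (fun n : ℕ => ((D : ℝ) / K) / n) atTop (nhds 0) :=
      tendsto_const_div_atTop_nhds_zero_nat _
    have h2 := h1.sub_const (1 / K)
    simpa [hgdef, zero_sub, neg_div] using h2
  have hgbdd : IsBoundedUnder (· ≤ ·) atTop g := hg.isBoundedUnder_le
  have hfcob : IsCoboundedUnder (· ≤ ·) atTop f := by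
    apply Filter.IsBoundedUnder.isCoboundedUnder_le
    refine ⟨-(Mz : ℝ), ?_⟩
    rw [eventually_map]
    filter_upwards [eventually_ge_atTop 0] with n _
    rcases Nat.eq_zero_or_pos n with h | h
    · subst h
      simp [hfdef, hSdef]
      exact_mod_cast hMz0
    · have hnR : (0 : ℝ) < (n : ℝ) := by exact_mod_cast h
      have h1 : -((n : ℤ) * Mz) ≤ S n := neg_le_of_abs_le (habs n)
      have h2 : (-(((n : ℝ)) * Mz) : ℝ) ≤ ((S n : ℤ) : ℝ) := by exact_mod_cast h1
      rw [hfdef]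
      show -(Mz : ℝ) ≤ ((S n : ℤ) : ℝ) / n
      rw [le_div_iff₀ hnR]
      nlinarith [h2]
  calc limsup f atTop ≤ limsup g atTop := limsup_le_limsup hfg hfcob hgbdd
    _ = -1 / K := hg.limsup_eq
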